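/- arXiv:2301.10686 — 2 statements merged into one kernel-verified Lean document; each statement's English description precedes it below -/
import Mathlib

section
/- Let γ ∈ ℂ^× and let c ∈ ℂ^× not be a root of unity. If a rational function f ∈ ℂ(z) satisfies (1 - γz)·f(z) = (1 - γcz)·f(cz), then there exists a constant A ∈ ℂ such that f(z) = A/(1 - γz). -/
open Polynomial

lemma coeff_comp_CcX (c : ℂ) (p : ℂ[X]) (n : ℕ) :
    (p.comp (C c * X)).coeff n = c ^ n * p.coeff n := by
  induction p using Polynomial.induction_on' with
  | add p q hp hq => simp [add_comp, hp, hq, mul_add]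
  | monomial k a =>
      simp only [monomial_comp, mul_pow, ← C_pow, coeff_C_mul, coeff_X_pow,
        coeff_monomial, mul_ite, mul_zero]
      split <;> rename_i h <;> simp [eq_comm, h, mul_comm, mul_left_comm]

lemma natDegree_comp_CcX (c : ℂ) (hc : c ≠ 0) (p : ℂ[X]) :
    (p.comp (C c * X)).natDegree = p.natDegree := by
  rcases eq_or_ne p 0 with rfl | hp
  · simp
  · apply le_antisymm
    · apply natDegree_le_iff_coeff_eq_zero.2
      intro n hn
      rw [coeff_comp_CcX, coeff_eq_zero_of_natDegree_lt hn, mul_zero]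
    · apply le_natDegree_of_ne_zero
      rw [coeff_comp_CcX]
      exact mul_ne_zero (pow_ne_zero _ hc) (by simpa using mt leadingCoeff_eq_zero.1 hp)

lemma leadingCoeff_comp_CcX (c : ℂ) (hc : c ≠ 0) (p : ℂ[X]) :
    (p.comp (C c * X)).leadingCoeff = c ^ p.natDegree * p.leadingCoeff := by
  rw [leadingCoeff, natDegree_comp_CcX c hc, coeff_comp_CcX]; rfl

lemma cpow_inj (c : ℂ) (hc : c ≠ 0) (hroot : ∀ n : ℕ, 0 < n → c ^ n ≠ 1)
    {m n : ℕ} (h : c ^ m = c ^ n) : m = n := by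
  wlog hmn : m ≤ n generalizing m n
  · exact (this h.symm (le_of_not_ge hmn)).symm
  by_contra hne
  have h1 : c ^ (n - m) = 1 := by
    have h2 := h.symm
    rw [show n = m + (n - m) by omega, pow_add] at h2
    field_simp at h2
    exact h2
  exact hroot (n - m) (by omega) h1

lemma key (c : ℂ) (hc : c ≠ 0) (hroot : ∀ n : ℕ, 0 < n → c ^ n ≠ 1) :
    ∀ p q : ℂ[X], q ≠ 0 → p.comp (C c * X) * q = p * q.comp (C c * X) →
      ∃ a : ℂ, p = C a * q := by
  have H : ∀ d : ℕ, ∀ p q : ℂ[X], p.natDegree = d → q ≠ 0 →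
      p.comp (C c * X) * q = p * q.comp (C c * X) → ∃ a : ℂ, p = C a * q := by
    intro d
    induction d using Nat.strong_induction_on with
    | _ d ih =>
    intro p q hn hq hpq
    rcases eq_or_ne p 0 with rfl | hp
    · exact ⟨0, by simp⟩
    have hde : p.natDegree = q.natDegree := by
      have h := congrArg leadingCoeff hpq
      rw [leadingCoeff_mul, leadingCoeff_mul, leadingCoeff_comp_CcX c hc,
        leadingCoeff_comp_CcX c hc] at h
      have hlp : p.leadingCoeff ≠ 0 := mt leadingCoeff_eq_zero.1 hp
      have hlq : q.leadingCoeff ≠ 0 := mt leadingCoeff_eq_zero.1 hq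
      have h2 : (c : ℂ) ^ p.natDegree = c ^ q.natDegree := by
        have hz : (c ^ p.natDegree - c ^ q.natDegree) * (p.leadingCoeff * q.leadingCoeff) = 0 := by
          linear_combination h
        rcases mul_eq_zero.1 hz with hz | hz
        · exact sub_eq_zero.1 hz
        · exact absurd hz (mul_ne_zero hlp hlq)
      exact cpow_inj c hc hroot h2
    set a := p.leadingCoeff / q.leadingCoeff with ha
    have hlq : q.leadingCoeff ≠ 0 := mt leadingCoeff_eq_zero.1 hq
    set p' := p - C a * q with hp'
    have hrel : p'.comp (C c * X) * q = p' * q.comp (C c * X) := by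
      simp only [hp', sub_comp, mul_comp, C_comp]
      ring_nf
      ring_nf at hpq
      rw [hpq]
      ring
    rcases eq_or_ne p' 0 with h0 | h0
    · exact ⟨a, by rw [← sub_eq_zero]; exact h0⟩
    · exfalso
      have hdlt : p'.natDegree < d := by
        have hdeg : p'.degree < p.degree := by
          apply degree_sub_lt _ hp
          · rw [leadingCoeff_mul, leadingCoeff_C, ha]
            field_simp
          · rw [degree_mul, degree_C (by rw [ha]; exact div_ne_zero (mt leadingCoeff_eq_zero.1 hp) hlq)]
            rw [degree_eq_natDegree hp, degree_eq_natDegree hq, hde]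
            simp
        rw [← hn]
        exact natDegree_lt_natDegree h0 hdeg
      obtain ⟨a', ha'⟩ := ih p'.natDegree hdlt p' q rfl hq hrel
      rcases eq_or_ne a' 0 with rfl | ha0
      · simp at ha'; exact h0 ha'
      · have h3 : p'.natDegree = q.natDegree := by
          rw [ha', natDegree_mul (by simpa using ha0) hq, natDegree_C, zero_add]
        omega
  intro p q; exact H p.natDegree p q rfl

/-- If `f ∈ ℂ(z)` satisfies `(1 - γz) f(z) = (1 - γcz) f(cz)` with
`γ ∈ ℂˣ` and `c ∈ ℂˣ` not a root of unity, then `f(z) = A / (1 - γz)` for some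
constant `A ∈ ℂ`. Substitution `z ↦ cz` is encoded by a ring homomorphism `σ`
fixing constants and sending `X` to `c • X`. -/
theorem stmt1 (γ c : ℂ) (hγ : γ ≠ 0) (hc : c ≠ 0)
    (hroot : ∀ n : ℕ, 0 < n → c ^ n ≠ 1)
    (σ : RatFunc ℂ →+* RatFunc ℂ)
    (hσC : ∀ a : ℂ, σ (RatFunc.C a) = RatFunc.C a)
    (hσX : σ RatFunc.X = RatFunc.C c * RatFunc.X)
    (f : RatFunc ℂ)
    (hf : (1 - RatFunc.C γ * RatFunc.X) * f = (1 - RatFunc.C (γ * c) * RatFunc.X) * σ f) :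
    ∃ A : ℂ, f = RatFunc.C A / (1 - RatFunc.C γ * RatFunc.X) := by
  have alg_inj := RatFunc.algebraMap_injective ℂ
  have hhom : σ.comp (algebraMap ℂ[X] (RatFunc ℂ)) =
      (algebraMap ℂ[X] (RatFunc ℂ)).comp (eval₂RingHom Polynomial.C (Polynomial.C c * Polynomial.X)) := by
    apply Polynomial.ringHom_ext
    · intro a
      simp [RatFunc.algebraMap_C, hσC]
    · simp [RatFunc.algebraMap_X, hσX, RatFunc.algebraMap_C]
  have hσalg : ∀ p : ℂ[X], σ (algebraMap ℂ[X] (RatFunc ℂ) p) =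
      algebraMap ℂ[X] (RatFunc ℂ) (p.comp (Polynomial.C c * Polynomial.X)) := by
    intro p
    have := RingHom.congr_fun hhom p
    simpa [Polynomial.comp] using this
  set D : RatFunc ℂ := 1 - RatFunc.C γ * RatFunc.X with hDdef
  have hDalg : D = algebraMap ℂ[X] (RatFunc ℂ) (1 - Polynomial.C γ * Polynomial.X) := by
    simp [hDdef, map_sub, map_one, map_mul, RatFunc.algebraMap_C, RatFunc.algebraMap_X]
  have hD : D ≠ 0 := by
    rw [hDalg]
    simp only [ne_eq, map_eq_zero_iff _ alg_inj]
    intro h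
    have := congrArg (Polynomial.coeff · 0) h
    simp at this
  set g : RatFunc ℂ := D * f with hgdef
  have hσg : σ g = g := by
    have hσD : σ D = 1 - RatFunc.C (γ * c) * RatFunc.X := by
      simp [hDdef, map_sub, map_mul, hσC, hσX, map_mul RatFunc.C, mul_assoc]
    rw [hgdef, map_mul, hσD, ← hf]
  -- pass to num/denom
  set p : ℂ[X] := g.num with hp
  set q : ℂ[X] := g.denom with hq
  have hq0 : q ≠ 0 := g.denom_ne_zero
  have hgnd : algebraMap ℂ[X] (RatFunc ℂ) p / algebraMap ℂ[X] (RatFunc ℂ) q = g :=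
    RatFunc.num_div_denom g
  have hτq0 : q.comp (Polynomial.C c * Polynomial.X) ≠ 0 := by
    intro h
    have := leadingCoeff_comp_CcX c hc q
    rw [h] at this
    exact (mul_ne_zero (pow_ne_zero _ hc) (mt Polynomial.leadingCoeff_eq_zero.1 hq0))
      (by simpa using this.symm)
  have hqalg0 : algebraMap ℂ[X] (RatFunc ℂ) q ≠ 0 := by
    simpa [map_eq_zero_iff _ alg_inj] using hq0
  have hτqalg0 : algebraMap ℂ[X] (RatFunc ℂ) (q.comp (Polynomial.C c * Polynomial.X)) ≠ 0 := by
    simpa [map_eq_zero_iff _ alg_inj] using hτq0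
  have hcross : p.comp (Polynomial.C c * Polynomial.X) * q = p * q.comp (Polynomial.C c * Polynomial.X) := by
    apply alg_inj
    rw [map_mul, map_mul]
    have h1 : σ g = algebraMap ℂ[X] (RatFunc ℂ) (p.comp (Polynomial.C c * Polynomial.X)) /
        algebraMap ℂ[X] (RatFunc ℂ) (q.comp (Polynomial.C c * Polynomial.X)) := by
      rw [← hgnd, map_div₀, hσalg, hσalg]
    rw [hσg, ← hgnd] at h1
    have h2 := (div_eq_div_iff hτqalg0 hqalg0).1 h1.symm
    linear_combination h2
  obtain ⟨a, hA⟩ := key c hc hroot p q hq0 hcross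
  have hgC : g = RatFunc.C a := by
    rw [← hgnd, hA, map_mul, mul_div_assoc, div_self hqalg0, mul_one,
      RatFunc.algebraMap_C]
  refine ⟨a, ?_⟩
  rw [eq_div_iff hD, ← hgC, hgdef, mul_comm]
end

section
/- Let q ∈ ℂ^× not be a root of unity, a ∈ ℂ^×, and let V be a ℂ-vector space with basis (w_j)_{j≥0}. Define linear operators K, E₁, E₀ on V by K w_j = q^{-2j} w_j, E₁ w_j = w_{j-1} (with w_{-1} = 0), and E₀ w_j = −a q^{2+j} [j+1]_q (q − q^{-1})^{-1} w_{j+1}, where [m]_q = (q^m − q^{-m})/(q − q^{-1}). Then these operators satisfy: K is invertible, K E₁ K^{-1} = q² E₁, K E₀ K^{-1} = q^{-2} E₀, and both quantum Serre relations Σ_{r=0}^{3} (−1)^r (E₁^{3−r}/[3−r]_q!) E₀ (E₁^{r}/[r]_q!) = 0 and Σ_{r=0}^{3} (−1)^r (E₀^{3−r}/[3−r]_q!) E₁ (E₀^{r}/[r]_q!) = 0, where [m]_q! = Π_{s=1}^m [s]_q. -/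
/-- The quantum integer `[m]_q = (q^m - q^{-m})/(q - q^{-1})`. -/
noncomputable def stmt7qnum (q : ℂ) (m : ℕ) : ℂ := (q ^ m - q⁻¹ ^ m) / (q - q⁻¹)

/-- The quantum factorial `[m]_q!`. -/
noncomputable def stmt7qfact (q : ℂ) : ℕ → ℂ
  | 0 => 1
  | n + 1 => stmt7qfact q n * stmt7qnum q (n + 1)

set_option maxHeartbeats 1600000 in
/-- The explicit operators `K, E₁, E₀` of the positive prefundamental
representation `L⁺_{1,a}` of `U_q(b) ⊆ U_q(ŝl₂)` satisfy the defining relations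
of the Borel subalgebra: `K` invertible, `K E₁ K⁻¹ = q² E₁`, `K E₀ K⁻¹ = q⁻² E₀`
and both quantum Serre relations (with `1 - C_{ij} = 3` terms). -/
theorem stmt7 (q a : ℂ) (hq0 : q ≠ 0) (hroot : ∀ n : ℕ, 0 < n → q ^ n ≠ 1) (ha : a ≠ 0)
    (V : Type) [AddCommGroup V] [Module ℂ V] (b : Module.Basis ℕ ℂ V)
    (K E1 E0 : Module.End ℂ V)
    (hK : ∀ j : ℕ, K (b j) = (q ^ (2 * j))⁻¹ • b j)
    (hE1zero : E1 (b 0) = 0)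
    (hE1 : ∀ j : ℕ, E1 (b (j + 1)) = b j)
    (hE0 : ∀ j : ℕ, E0 (b j) =
      (-a * q ^ (2 + j) * stmt7qnum q (j + 1) / (q - q⁻¹)) • b (j + 1)) :
    Function.Bijective K ∧
    K * E1 = (q ^ 2 : ℂ) • (E1 * K) ∧
    K * E0 = ((q ^ 2 : ℂ))⁻¹ • (E0 * K) ∧
    (∑ r ∈ Finset.range 4,
      ((-1 : ℂ) ^ r * (stmt7qfact q (3 - r) * stmt7qfact q r)⁻¹) •
        (E1 ^ (3 - r) * E0 * E1 ^ r)) = 0 ∧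
    (∑ r ∈ Finset.range 4,
      ((-1 : ℂ) ^ r * (stmt7qfact q (3 - r) * stmt7qfact q r)⁻¹) •
        (E0 ^ (3 - r) * E1 * E0 ^ r)) = 0 := by
  have hp0 : ∀ n : ℕ, (q : ℂ) ^ n ≠ 0 := fun n => pow_ne_zero n hq0
  have hqq : q * q⁻¹ = 1 := mul_inv_cancel₀ hq0
  have hd : q - q⁻¹ ≠ 0 := by
    rw [sub_ne_zero]
    intro h
    exact hroot 2 (by norm_num) (by rw [sq]; nth_rewrite 2 [h]; exact hqq)
  have hqj : ∀ j : ℕ, q ^ j * q⁻¹ ^ j = 1 := by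
    intro j; rw [← mul_pow, hqq, one_pow]
  have hc' : ∀ j : ℕ, E0 (b j) =
      (-a * q ^ 2 * (q * (q ^ j) ^ 2 - q⁻¹) / (q - q⁻¹) / (q - q⁻¹)) • b (j + 1) := by
    intro j
    rw [hE0 j]
    congr 1
    unfold stmt7qnum
    rw [pow_add, pow_add]
    linear_combination (a * q ^ 2 * q⁻¹ / (q - q⁻¹) / (q - q⁻¹)) * hqj j
  have hf1 : stmt7qfact q 1 = 1 := by
    show stmt7qfact q 0 * stmt7qnum q 1 = 1
    unfold stmt7qfact stmt7qnum
    rw [pow_one, pow_one, div_self hd, one_mul]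
  have hf2 : stmt7qfact q 2 = q + q⁻¹ := by
    show stmt7qfact q 1 * stmt7qnum q 2 = _
    rw [hf1, one_mul]
    unfold stmt7qnum
    rw [div_eq_iff hd]
    ring
  have hf3 : stmt7qfact q 3 = (q + q⁻¹) * (q ^ 2 + q * q⁻¹ + q⁻¹ ^ 2) := by
    show stmt7qfact q 2 * stmt7qnum q 3 = _
    rw [hf2]
    unfold stmt7qnum
    congr 1
    rw [div_eq_iff hd]
    ring
  have hf0 : stmt7qfact q 0 = 1 := rfl
  have hF3 : q ^ 2 + q * q⁻¹ + q⁻¹ ^ 2 ≠ 0 := by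
    intro h
    have k1 : q ^ 4 + q ^ 2 + 1 = 0 := by
      linear_combination (q ^ 2) * h - (q ^ 2 + q * q⁻¹ + 1) * hqq
    exact hroot 6 (by norm_num) (by linear_combination (q ^ 2 - 1) * k1)
  have hi3 : (q ^ 2 + q * q⁻¹ + q⁻¹ ^ 2) * (q ^ 2 + q * q⁻¹ + q⁻¹ ^ 2)⁻¹ = 1 :=
    mul_inv_cancel₀ hF3
  refine ⟨?_, ?_, ?_, ?_, ?_⟩
  · -- bijective
    have h1 : K ∘ₗ (b.constr ℂ fun j => (q ^ (2*j) : ℂ) • b j) = LinearMap.id := by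
      apply b.ext
      intro j
      simp [Module.Basis.constr_basis, hK, smul_smul, hp0 (2*j)]
    have h2 : (b.constr ℂ fun j => (q ^ (2*j) : ℂ) • b j) ∘ₗ K = LinearMap.id := by
      apply b.ext
      intro j
      simp [Module.Basis.constr_basis, hK, smul_smul, hp0 (2*j)]
    constructor
    · intro x y hxy
      have := congrArg (b.constr ℂ fun j => (q ^ (2*j) : ℂ) • b j) hxy
      calc x = ((b.constr ℂ fun j => (q ^ (2*j) : ℂ) • b j) ∘ₗ K) x := by rw [h2]; rfl
        _ = ((b.constr ℂ fun j => (q ^ (2*j) : ℂ) • b j) ∘ₗ K) y := by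
              simpa [LinearMap.comp_apply] using this
        _ = y := by rw [h2]; rfl
    · intro y
      exact ⟨(b.constr ℂ fun j => (q ^ (2*j) : ℂ) • b j) y,
        by simpa [LinearMap.comp_apply] using LinearMap.congr_fun h1 y⟩
  · -- K E1
    apply b.ext
    intro j
    cases j with
    | zero => simp [Module.End.mul_apply, hE1zero, hK]
    | succ n =>
      simp only [Module.End.mul_apply, LinearMap.smul_apply, hK, hE1, map_smul]
      rw [smul_smul]
      congr 1
      field_simp
      ring
  · -- K E0
    apply b.ext
    intro j
    simp only [Module.End.mul_apply, LinearMap.smul_apply, hK, hE0, map_smul]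
    simp only [smul_smul]
    congr 1
    field_simp
    ring
  · -- Serre 1
    have hE1pow : ∀ (r j : ℕ), (E1 ^ r) (b (j + r)) = b j := by
      intro r
      induction r with
      | zero => intro j; simp
      | succ n ih =>
        intro j
        rw [pow_succ, Module.End.mul_apply, show j + (n + 1) = (j + n) + 1 from rfl,
          hE1 (j + n), ih j]
    have hE1low : ∀ (r j : ℕ), j < r → (E1 ^ r) (b j) = 0 := by
      intro r
      induction r with
      | zero => intro j h; exact absurd h (Nat.not_lt_zero j)
      | succ n ih =>
        intro j h
        rw [pow_succ, Module.End.mul_apply]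
        cases j with
        | zero => rw [hE1zero, map_zero]
        | succ m => rw [hE1 m]; exact ih m (by omega)
    apply b.ext
    intro j
    rw [Finset.sum_range_succ, Finset.sum_range_succ, Finset.sum_range_succ,
      Finset.sum_range_one]
    norm_num
    rcases j with _|_|_|k
    · -- j = 0
      have B1 : (E1 ^ 3) (b (0 + 1)) = 0 := hE1low 3 1 (by norm_num)
      have B2 : (E1 ^ 2) (b 0) = 0 := hE1low 2 0 (by norm_num)
      have B3 : (E1 ^ 3) (b 0) = 0 := hE1low 3 0 (by norm_num)
      simp only [LinearMap.add_apply, LinearMap.smul_apply, Module.End.mul_apply,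
        pow_zero, pow_one, Module.End.one_apply, LinearMap.zero_apply, hc', map_smul,
        hE1zero, map_zero, B1, B2, B3, smul_zero, neg_zero, add_zero, zero_add]
    · -- j = 1
      have B1 : (E1 ^ 3) (b (1 + 1)) = 0 := hE1low 3 2 (by norm_num)
      have B2 : E1 (b 1) = b 0 := hE1 0
      have B3 : (E1 ^ 2) (b (0 + 1)) = 0 := hE1low 2 1 (by norm_num)
      have B4 : (E1 ^ 2) (b 1) = 0 := hE1low 2 1 (by norm_num)
      have B5 : (E1 ^ 3) (b 1) = 0 := hE1low 3 1 (by norm_num)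
      simp only [LinearMap.add_apply, LinearMap.smul_apply, Module.End.mul_apply,
        pow_zero, pow_one, Module.End.one_apply, LinearMap.zero_apply, hc', map_smul,
        map_zero, B1, B2, B3, B4, B5, smul_zero, neg_zero, add_zero, zero_add]
    · -- j = 2
      have B1 : (E1 ^ 3) (b (2 + 1)) = b 0 := hE1pow 3 0
      have B2 : E1 (b 2) = b 1 := hE1 1
      have B3 : (E1 ^ 2) (b (1 + 1)) = b 0 := hE1pow 2 0
      have B4 : (E1 ^ 2) (b 2) = b 0 := hE1pow 2 0
      have B5 : E1 (b (0 + 1)) = b 0 := hE1 0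
      have B6 : (E1 ^ 3) (b 2) = 0 := hE1low 3 2 (by norm_num)
      simp only [LinearMap.add_apply, LinearMap.smul_apply, Module.End.mul_apply,
        pow_zero, pow_one, Module.End.one_apply, LinearMap.zero_apply, hc', map_smul,
        map_zero, B1, B2, B3, B4, B5, B6, smul_zero, neg_zero, add_zero, zero_add,
        smul_smul]
      simp only [← neg_smul]
      rw [← add_smul, ← add_smul]
      refine smul_eq_zero_of_left ?_ _
      rw [hf0, hf1, hf2, hf3]
      simp only [mul_inv, inv_one]
      linear_combination
        ((q + q⁻¹)⁻¹ * (q - q⁻¹)⁻¹ ^ 2 * (q ^ 2 + q * q⁻¹ + q⁻¹ ^ 2)⁻¹ *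
          (a * q ^ 2 * (q ^ 3 + q ^ 2 * q⁻¹ - q⁻¹))) * hqq
        + (-((q + q⁻¹)⁻¹ * (q - q⁻¹)⁻¹ ^ 2) *
            (a * q ^ 2 * (q ^ 3 - q⁻¹) - a * q ^ 2 * (q - q⁻¹))) * hi3
    · -- j = k + 3
      have A0 : (E1 ^ 3) (b (k + 3 + 1)) = b (k + 1) := hE1pow 3 (k + 1)
      have A1 : E1 (b (k + 3)) = b (k + 2) := hE1 (k + 2)
      have A2 : (E1 ^ 2) (b (k + 2 + 1)) = b (k + 1) := hE1pow 2 (k + 1)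
      have A3 : (E1 ^ 2) (b (k + 3)) = b (k + 1) := hE1pow 2 (k + 1)
      have A4 : E1 (b (k + 1 + 1)) = b (k + 1) := hE1 (k + 1)
      have A5 : (E1 ^ 3) (b (k + 3)) = b k := hE1pow 3 k
      simp only [LinearMap.add_apply, LinearMap.smul_apply, Module.End.mul_apply,
        pow_zero, pow_one, Module.End.one_apply, LinearMap.zero_apply, hc', map_smul,
        A0, A1, A2, A3, A4, A5, smul_smul]
      simp only [← neg_smul]
      rw [← add_smul, ← add_smul, ← add_smul]
      refine smul_eq_zero_of_left ?_ _
      rw [hf0, hf1, hf2, hf3]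
      simp only [mul_inv, inv_one]
      linear_combination
        ((q + q⁻¹)⁻¹ * (q - q⁻¹)⁻¹ ^ 2 * (q ^ 2 + q * q⁻¹ + q⁻¹ ^ 2)⁻¹ *
          (a * q ^ 3 * (q ^ k) ^ 2 * (q ^ 4 + q ^ 3 * q⁻¹ - q * q⁻¹ - 1))) * hqq
        + (-((q + q⁻¹)⁻¹ * (q - q⁻¹)⁻¹ ^ 2) *
            (a * q ^ 2 * (q * (q ^ (k + 2)) ^ 2 - q⁻¹)
              - a * q ^ 2 * (q * (q ^ (k + 1)) ^ 2 - q⁻¹))) * hi3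
  · -- Serre 2
    have p3 : E0 ^ 3 = E0 ^ 2 * E0 := pow_succ E0 2
    have p2 : E0 ^ 2 = E0 ^ 1 * E0 := pow_succ E0 1
    have p1 : E0 ^ 1 = E0 := pow_one E0
    apply b.ext
    intro j
    rw [Finset.sum_range_succ, Finset.sum_range_succ, Finset.sum_range_succ,
      Finset.sum_range_one]
    norm_num
    rcases j with _|k
    · -- j = 0
      simp only [p3, p2, p1, LinearMap.add_apply, LinearMap.smul_apply,
        Module.End.mul_apply, pow_zero, Module.End.one_apply, LinearMap.zero_apply,
        hc', hE1, hE1zero, map_smul, map_zero, smul_zero, smul_smul, neg_zero,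
        add_zero, zero_add]
      simp only [← neg_smul]
      rw [← add_smul, ← add_smul]
      refine smul_eq_zero_of_left ?_ _
      rw [hf0, hf1, hf2, hf3]
      simp only [mul_inv, inv_one]
      linear_combination
        ((q + q⁻¹)⁻¹ * (q - q⁻¹)⁻¹ ^ 6 * (q ^ 2 + q * q⁻¹ + q⁻¹ ^ 2)⁻¹ *
          (-(a ^ 3) * (q ^ 2 * (q - q⁻¹)) * (q ^ 2 * (q ^ 3 - q⁻¹)) * q ^ 2 *
            (q ^ 3 + q ^ 2 * q⁻¹ - q⁻¹))) * hqq
        + (-((q + q⁻¹)⁻¹ * (q - q⁻¹)⁻¹ ^ 6) *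
            (a ^ 3 * ((q ^ 2 * (q - q⁻¹)) ^ 2 * (q ^ 2 * (q ^ 3 - q⁻¹))
              - (q ^ 2 * (q - q⁻¹)) * (q ^ 2 * (q ^ 3 - q⁻¹)) ^ 2))) * hi3
    · -- j = k + 1
      simp only [p3, p2, p1, LinearMap.add_apply, LinearMap.smul_apply,
        Module.End.mul_apply, pow_zero, Module.End.one_apply, LinearMap.zero_apply,
        hc', hE1, map_smul, smul_smul]
      simp only [← neg_smul]
      rw [← add_smul, ← add_smul, ← add_smul]
      refine smul_eq_zero_of_left ?_ _
      rw [hf0, hf1, hf2, hf3]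
      simp only [mul_inv, inv_one]
      linear_combination
        ((q + q⁻¹)⁻¹ * (q - q⁻¹)⁻¹ ^ 6 * (q ^ 2 + q * q⁻¹ + q⁻¹ ^ 2)⁻¹ *
          (-(a ^ 3) * (q ^ 2 * (q * (q ^ (k + 1)) ^ 2 - q⁻¹)) *
            (q ^ 2 * (q * (q ^ (k + 2)) ^ 2 - q⁻¹)) * q ^ 3 * (q ^ k) ^ 2 *
            (q ^ 4 + q ^ 3 * q⁻¹ - q * q⁻¹ - 1))) * hqq
        + (-((q + q⁻¹)⁻¹ * (q - q⁻¹)⁻¹ ^ 6) *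
            (a ^ 3 * ((q ^ 2 * (q * (q ^ (k + 1)) ^ 2 - q⁻¹)) ^ 2 *
                (q ^ 2 * (q * (q ^ (k + 2)) ^ 2 - q⁻¹))
              - (q ^ 2 * (q * (q ^ (k + 1)) ^ 2 - q⁻¹)) *
                (q ^ 2 * (q * (q ^ (k + 2)) ^ 2 - q⁻¹)) ^ 2))) * hi3
end
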